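/- Every horizontal compression rule application preserves the Leveled-Colored property: if the colored deduction subgraph of a valid DLDS is a leveled rooted DAG (every deduction edge connects consecutive levels and r is the root), then after collapsing two same-level, same-label nodes by any compression rule, the resulting structure is again a leveled rooted DAG with the same root and the same height. -/
import Mathlib


/-- Formulas of the purely implicational fragment `M⊃` of minimal logic. -/
inductive Formula : Type
  | var : ℕ → Formula
  | imp : Formula → Formula → Formula
  deriving DecidableEq

/-- Colors of deduction edges: an ordinal color (with `ord 0` the default
color of uncollapsed edges) or the special color `λ`. -/
inductive Color : Type
  | ord : ℕ → Color
  | lam : Color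
  deriving DecidableEq

/-- A dag-like derivability structure (DLDS): colored deduction edges `ED`,
ancestor edges `EA`, hypothesis marks `hyp`, root `r`, levels, formula labels
`l`, dependency-set labels `L` on deduction edges, and relative-address path
labels `P` on ancestor edges. -/
structure DLDS (V : Type) where
  ED : Color → V → V → Prop
  EA : V → V → Prop
  hyp : V → Prop
  r : V
  level : V → ℕ
  l : V → Formula
  L : Color → V → V → Finset Formula
  P : V → V → List Color

/-- The set of outgoing deduction edges (color, target) of a node. -/
def DLDS.outs {V : Type} (D : DLDS V) (u : V) : Set (Color × V) :=
  {p | D.ED p.1 u p.2}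

/-- The relative-address resolution algorithm: starting at `u` and following
the address `γ`, at a node with a unique outgoing deduction edge follow it
(without consuming), at a node with several outgoing edges follow the unique
edge whose color is the head of the remaining address, consuming it; an empty
remaining address stops. `Resolves D u γ v` holds when the walk reaches `v`. -/
inductive Resolves {V : Type} (D : DLDS V) : V → List Color → V → Prop
  | done (u : V) : Resolves D u [] u
  | single {u w v : V} {c : Color} {γ : List Color} :
      (D.outs u).ncard = 1 → D.ED c u w → γ ≠ [] →
      Resolves D w γ v → Resolves D u γ v
  | branch {u w v : V} {c : Color} {γ : List Color} :
      1 < (D.outs u).ncard → D.ED c u w →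
      (∀ c' w', D.ED c' u w' → c' = c → w' = w) →
      Resolves D w γ v → Resolves D u (c :: γ) v

/-- Validity of a DLDS (graph-theoretic part): the colored deduction graph is
leveled with root at level 0, color-acyclic and simple, ancestor edges go from
strictly lower to higher levels, and `P` records relative addresses. -/
structure DLDS.Valid {V : Type} (D : DLDS V) : Prop where
  leveled : ∀ c a b, D.ED c a b → D.level a = D.level b + 1
  rootLevel : D.level D.r = 0
  colorAcyclic : ∀ c a, ¬ Relation.TransGen (D.ED c) a a
  simple : ∀ a b c c', D.ED c a b → D.ED c' a b → c = c'
  targetUnique : ∀ c a b b', D.ED c a b → D.ED c a b' → b = b'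
  ancLevel : ∀ a b, D.EA a b → D.level a < D.level b
  backway : ∀ a b, D.EA a b → Resolves D b (D.P a b) a

/-- Merging `v` into `u`. -/
def merge {V : Type} [DecidableEq V] (u v x : V) : V := if x = v then u else x

/-- A generic horizontal compression rule application (`HCom(u,v)`) collapsing
the same-level, same-label nodes `u` and `v`: levels, labels and the root are
unchanged, every deduction edge of the result is the image under the merge of
a deduction edge of the input (possibly recolored), and ancestor edges of the
result go from lower to strictly higher levels. -/
structure Collapse {V : Type} [DecidableEq V] (D D' : DLDS V) (u v : V) : Prop where
  ne : u ≠ v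
  sameLevel : D.level u = D.level v
  sameLabel : D.l u = D.l v
  level_eq : ∀ x, D'.level x = D.level x
  label_eq : ∀ x, D'.l x = D.l x
  root_eq : D'.r = D.r
  ed_image : ∀ c a b, D'.ED c a b →
      ∃ c' a' b', D.ED c' a' b' ∧ a = merge u v a' ∧ b = merge u v b'
  ea_up : ∀ a b, D'.EA a b → D'.level a < D'.level b

/-- The height of a DLDS: the maximal level. -/
def DLDS.height {V : Type} [Fintype V] (D : DLDS V) : ℕ :=
  Finset.univ.sup D.level

/-- every compression rule application preserves the
Leveled-Colored property: after collapsing two same-level, same-label nodes,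
the colored deduction graph is again a leveled rooted DAG with the same root
(of level 0 and out-degree 0) and the same height. -/
theorem collapse_preserves_leveled {V : Type} [Fintype V] [DecidableEq V]
    (D D' : DLDS V) (u v : V) (hval : D.Valid) (hc : Collapse D D' u v) :
    (∀ c a b, D'.ED c a b → D'.level a = D'.level b + 1) ∧
    D'.r = D.r ∧ D'.level D'.r = 0 ∧
    (∀ c w, ¬ D'.ED c D'.r w) ∧
    (∀ c a, ¬ Relation.TransGen (D'.ED c) a a) ∧
    D'.height = D.height := by

  have hlm : ∀ x, D.level (merge u v x) = D.level x := by
    intro x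
    unfold merge
    split <;> simp_all [hc.sameLevel]
  have hlev : ∀ c a b, D'.ED c a b → D'.level a = D'.level b + 1 := by
    intro c a b h
    obtain ⟨c', a', b', hE, ha, hb⟩ := hc.ed_image c a b h
    rw [hc.level_eq, hc.level_eq, ha, hb, hlm, hlm]
    exact hval.leveled c' a' b' hE
  refine ⟨hlev, hc.root_eq, ?_, ?_, ?_, ?_⟩
  · rw [hc.level_eq, hc.root_eq]; exact hval.rootLevel
  · intro c w h
    have := hlev c D'.r w h
    rw [hc.level_eq, hc.root_eq, hval.rootLevel] at this
    omega
  · intro c a h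
    have key : ∀ x y, Relation.TransGen (D'.ED c) x y → D'.level y < D'.level x := by
      intro x y hxy
      induction hxy with
      | single h => have := hlev _ _ _ h; omega
      | tail _ h ih => have := hlev _ _ _ h; omega
    exact lt_irrefl _ (key a a h)
  · unfold DLDS.height
    congr 1
    funext x
    exact hc.level_eq x
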